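/- Let α ∈ (0, π/4), let λ ∈ ℂ with |λ| ≤ sin α, let t ∈ [0, 1], let n ∈ ℕ, and let Z = (Z₁, …, Z_{n+1}) ∈ ℂ^{n+1} be a nonzero vector. Set w = (1 + λt)^{−2}·|Z₁|² + |Z₂|² + ⋯ + |Z_{n+1}|². Then Re w ≥ (cos(2α)/4)·‖Z‖², |w| ≥ (cos(2α)/4)·‖Z‖², and |arg w| ≤ 2α, where ‖Z‖² = |Z₁|² + ⋯ + |Z_{n+1}|². -/

import Mathlib

open Real Complex Finset

private lemma aux_s_lt_one (s c : ℝ) (hs : 0 < s) (hc : 0 < c) (h : s ^ 2 + c ^ 2 = 1) :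
    s < 1 := by nlinarith [mul_pos hc hc]

private lemma aux_x_pos (x y s : ℝ) (hs0 : 0 < s) (hs1 : s < 1)
    (hd : (x - 1) ^ 2 + y ^ 2 ≤ s ^ 2) : 0 < x := by
  nlinarith [sq_nonneg y, sq_nonneg (x - 1 + s)]

private lemma aux_key2 (x y s : ℝ) (hs0 : 0 ≤ s) (hs1 : s ≤ 1)
    (hd : (x - 1) ^ 2 + y ^ 2 ≤ s ^ 2) : y ^ 2 * (1 - s ^ 2) ≤ x ^ 2 * s ^ 2 := by
  have h0 : (0:ℝ) ≤ 1 - s ^ 2 := by nlinarith [mul_nonneg hs0 hs0]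
  nlinarith [sq_nonneg (x - (1 - s ^ 2)),
    mul_nonneg (by linarith : (0:ℝ) ≤ s ^ 2 - (x - 1) ^ 2 - y ^ 2) h0]

private lemma aux_N_le_four (x y s : ℝ) (hs0 : 0 < s) (hs1 : s < 1)
    (hd : (x - 1) ^ 2 + y ^ 2 ≤ s ^ 2) : x ^ 2 + y ^ 2 ≤ 4 := by
  nlinarith [sq_nonneg (x - 1 - s), sq_nonneg y]

private lemma aux_xy (x y s c : ℝ) (hc2 : c ^ 2 = 1 - s ^ 2)
    (hk : y ^ 2 * (1 - s ^ 2) ≤ x ^ 2 * s ^ 2) :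
    (c ^ 2 - s ^ 2) * (x ^ 2 + y ^ 2) ≤ x ^ 2 - y ^ 2 := by
  rw [hc2]; nlinarith

private lemma aux_cone (x Y s c : ℝ) (hx : 0 ≤ x) (hY : 0 ≤ Y) (hs : 0 ≤ s) (hc : 0 ≤ c)
    (hk : Y * c ≤ x * s) : 2 * x * Y * (c ^ 2 - s ^ 2) ≤ 2 * s * c * (x ^ 2 - Y ^ 2) := by
  nlinarith [mul_nonneg (sub_nonneg.2 hk) (by positivity : (0:ℝ) ≤ x * c + Y * s)]

private lemma aux_part1 (C N e b xy : ℝ) (hC0 : 0 < C) (hC1 : C ≤ 1) (hN0 : 0 < N)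
    (hN4 : N ≤ 4) (he : 0 ≤ e) (hb : 0 ≤ b) (hxy : C * N ≤ xy) :
    C / 4 * (e * N ^ 2 + b) ≤ xy * e + b := by
  nlinarith [mul_le_mul_of_nonneg_right hxy he,
    mul_nonneg (mul_nonneg (mul_nonneg hC0.le hN0.le) he) (by linarith : (0:ℝ) ≤ 4 - N),
    mul_nonneg hb (by linarith : (0:ℝ) ≤ 1 - C)]

private lemma aux_part3 (x Y s c e b xy : ℝ) (he : 0 ≤ e) (hb : 0 ≤ b)
    (hs : 0 ≤ s) (hc : 0 ≤ c)
    (hY : 2 * x * Y * (c ^ 2 - s ^ 2) ≤ 2 * s * c * xy) :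
    2 * x * Y * e * (c ^ 2 - s ^ 2) ≤ 2 * s * c * (xy * e + b) := by
  nlinarith [mul_le_mul_of_nonneg_right hY he,
    mul_nonneg (mul_nonneg (mul_nonneg (by norm_num : (0:ℝ) ≤ 2) hs) hc) hb]

set_option maxHeartbeats 1000000 in
theorem numerical_range_diagonal (α : ℝ) (hα : α ∈ Set.Ioo 0 (Real.pi / 4))
    (lam : ℂ) (hlam : ‖lam‖ ≤ Real.sin α) (t : ℝ) (ht : t ∈ Set.Icc (0 : ℝ) 1)
    (n : ℕ) (Z : Fin (n + 1) → ℂ) (hZ : Z ≠ 0)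
    (w : ℂ)
    (hw : w = ((1 + lam * t) ^ 2)⁻¹ * ((‖Z 0‖ : ℂ)) ^ 2
        + ∑ i ∈ Finset.univ \ {0}, ((‖Z i‖ : ℂ)) ^ 2) :
    w.re ≥ (Real.cos (2 * α) / 4) * ∑ i, ‖Z i‖ ^ 2 ∧
    ‖w‖ ≥ (Real.cos (2 * α) / 4) * ∑ i, ‖Z i‖ ^ 2 ∧
    |Complex.arg w| ≤ 2 * α := by
  obtain ⟨hα0, hα4⟩ := hα
  obtain ⟨ht0, ht1⟩ := ht
  have hπ := Real.pi_pos
  set s := Real.sin α with hs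
  set c := Real.cos α with hc
  have hs0 : 0 < s := Real.sin_pos_of_pos_of_lt_pi hα0 (by linarith)
  have hc0 : 0 < c := Real.cos_pos_of_mem_Ioo ⟨by linarith, by linarith⟩
  have hpyth : s ^ 2 + c ^ 2 = 1 := Real.sin_sq_add_cos_sq α
  have hc2 : c ^ 2 = 1 - s ^ 2 := by linarith
  have hcos2 : Real.cos (2 * α) = c ^ 2 - s ^ 2 := by
    rw [Real.cos_two_mul]; linarith
  have hcos2pos : 0 < c ^ 2 - s ^ 2 := by
    rw [← hcos2]
    exact Real.cos_pos_of_mem_Ioo ⟨by linarith, by linarith⟩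
  have hsin2 : Real.sin (2 * α) = 2 * s * c := by
    rw [Real.sin_two_mul]
  have hs1 : s < 1 := aux_s_lt_one s c hs0 hc0 hpyth
  -- components of lam
  have hlamsq : lam.re ^ 2 + lam.im ^ 2 ≤ s ^ 2 := by
    have h1 : ‖lam‖ ^ 2 ≤ s ^ 2 :=
      pow_le_pow_left₀ (norm_nonneg lam) hlam 2
    rwa [Complex.sq_norm, Complex.normSq_apply, ← sq, ← sq] at h1
  set μ : ℂ := 1 + lam * (t : ℂ) with hμ
  set x : ℝ := 1 + lam.re * t with hxdef
  set y : ℝ := lam.im * t with hydef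
  have hμre : μ.re = x := by simp [hμ, hxdef]
  have hμim : μ.im = y := by simp [hμ, hydef]
  have hdisc : (x - 1) ^ 2 + y ^ 2 ≤ s ^ 2 := by
    have h1 : (x - 1) ^ 2 + y ^ 2 = (lam.re ^ 2 + lam.im ^ 2) * t ^ 2 := by
      rw [hxdef, hydef]; ring
    have ht2 : t ^ 2 ≤ 1 := by
      calc t ^ 2 ≤ 1 ^ 2 := pow_le_pow_left₀ ht0 ht1 2
        _ = 1 := one_pow 2
    have h2 : (lam.re ^ 2 + lam.im ^ 2) * t ^ 2 ≤ s ^ 2 * 1 :=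
      mul_le_mul hlamsq ht2 (by positivity) (by positivity)
    rw [h1]; linarith
  have hx0 : 0 < x := aux_x_pos x y s hs0 hs1 hdisc
  -- the key geometric inequality : |y| * c ≤ x * s
  have hY0 : 0 ≤ |y| := abs_nonneg y
  have hysq : |y| ^ 2 = y ^ 2 := sq_abs y
  have hkey2 : y ^ 2 * (1 - s ^ 2) ≤ x ^ 2 * s ^ 2 := aux_key2 x y s hs0.le hs1.le hdisc
  have hkey : |y| * c ≤ x * s := by
    refine le_of_sq_le_sq ?_ (by positivity)
    calc (|y| * c) ^ 2 = y ^ 2 * c ^ 2 := by rw [mul_pow, hysq]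
      _ = y ^ 2 * (1 - s ^ 2) := by rw [hc2]
      _ ≤ x ^ 2 * s ^ 2 := hkey2
      _ = (x * s) ^ 2 := by ring
  set N : ℝ := x ^ 2 + y ^ 2 with hN
  have hN0 : 0 < N := by positivity
  have hN4 : N ≤ 4 := aux_N_le_four x y s hs0 hs1 hdisc
  have hxy : (c ^ 2 - s ^ 2) * N ≤ x ^ 2 - y ^ 2 := aux_xy x y s c hc2 hkey2
  have hxy0 : 0 < x ^ 2 - y ^ 2 := lt_of_lt_of_le (by positivity) hxy
  -- components of w
  set a : ℝ := ‖Z 0‖ ^ 2 with ha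
  set b : ℝ := ∑ i ∈ Finset.univ \ {0}, ‖Z i‖ ^ 2 with hb
  have ha0 : 0 ≤ a := by positivity
  have hb0 : 0 ≤ b := Finset.sum_nonneg fun i _ => by positivity
  have hw' : w = (μ ^ 2)⁻¹ * (a : ℂ) + (b : ℂ) := by
    rw [hw, hb, ha]
    push_cast
    ring
  have hnormSq : Complex.normSq (μ ^ 2) = N ^ 2 := by
    rw [map_pow, Complex.normSq_apply, hμre, hμim, hN]; ring
  have h2re : (μ ^ 2).re = x ^ 2 - y ^ 2 := by
    rw [sq, Complex.mul_re, hμre, hμim]; ring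
  have h2im : (μ ^ 2).im = 2 * x * y := by
    rw [sq, Complex.mul_im, hμre, hμim]; ring
  set e : ℝ := a / N ^ 2 with he
  have he0 : 0 ≤ e := by positivity
  have hae : a = e * N ^ 2 := by rw [he]; field_simp
  have hwre : w.re = (x ^ 2 - y ^ 2) * e + b := by
    rw [hw']
    simp only [Complex.add_re, Complex.mul_re, Complex.inv_re, Complex.inv_im,
      hnormSq, h2re, h2im, Complex.ofReal_re, Complex.ofReal_im, he]
    field_simp
    ring
  have hwim : w.im = -(2 * x * y) * e := by
    rw [hw']
    simp only [Complex.add_im, Complex.mul_im, Complex.inv_re, Complex.inv_im,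
      hnormSq, h2re, h2im, Complex.ofReal_re, Complex.ofReal_im, he]
    field_simp
    ring
  -- total sum
  have hT : ∑ i, ‖Z i‖ ^ 2 = a + b := by
    rw [ha, hb]
    exact Finset.sum_eq_add_sum_sdiff_singleton_of_mem (Finset.mem_univ 0) _
  -- part 1
  have h1 : w.re ≥ Real.cos (2 * α) / 4 * ∑ i, ‖Z i‖ ^ 2 := by
    rw [hT, hwre, hcos2, hae]
    have hc1 : c ^ 2 - s ^ 2 ≤ 1 := by linarith [sq_nonneg s]
    exact aux_part1 (c ^ 2 - s ^ 2) N e b (x ^ 2 - y ^ 2) hcos2pos hc1 hN0 hN4 he0 hb0 hxy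
  refine ⟨h1, le_trans h1 (Complex.re_le_norm w), ?_⟩
  -- part 3 : argument bound
  have hsum_pos : 0 < ∑ i, ‖Z i‖ ^ 2 := by
    obtain ⟨j, hj⟩ := Function.ne_iff.1 hZ
    have hj' : Z j ≠ 0 := by simpa using hj
    exact Finset.sum_pos' (fun i _ => by positivity)
      ⟨j, Finset.mem_univ j, pow_pos (norm_pos_iff.mpr hj') 2⟩
  have hwre_pos : 0 < w.re :=
    lt_of_lt_of_le (mul_pos (by rw [hcos2]; linarith) hsum_pos) h1
  have h2α : 2 * α < π / 2 := by linarith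
  have habsarg : |Complex.arg w| < π / 2 :=
    Complex.abs_arg_lt_pi_div_two_iff.2 (Or.inl hwre_pos)
  have hargeq : Complex.arg w = Real.arctan (w.im / w.re) := by
    rw [← Complex.tan_arg w]
    exact (Real.arctan_tan (by linarith [(abs_lt.1 habsarg).1])
      (by linarith [(abs_lt.1 habsarg).2])).symm
  have htan : Real.tan (2 * α) = 2 * s * c / (c ^ 2 - s ^ 2) := by
    rw [Real.tan_eq_sin_div_cos, hsin2, hcos2]
  -- |w.im| ≤ tan(2α) * w.re
  have himabs : |w.im| = 2 * x * |y| * e := by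
    rw [hwim, abs_mul, abs_neg, _root_.abs_of_nonneg he0, abs_mul, abs_mul, _root_.abs_two,
      _root_.abs_of_nonneg hx0.le]
  have hY : 2 * x * |y| * (c ^ 2 - s ^ 2) ≤ 2 * s * c * (x ^ 2 - y ^ 2) := by
    have h3 := aux_cone x |y| s c hx0.le hY0 hs0.le hc0.le hkey
    rwa [hysq] at h3
  have hbound : |w.im| ≤ Real.tan (2 * α) * w.re := by
    rw [himabs, hwre, htan, div_mul_eq_mul_div, le_div_iff₀ hcos2pos]
    exact aux_part3 x |y| s c e b (x ^ 2 - y ^ 2) he0 hb0 hs0.le hc0.le hY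
  rw [hargeq]
  have hd : |w.im / w.re| ≤ Real.tan (2 * α) := by
    rw [abs_div, abs_of_pos hwre_pos, div_le_iff₀ hwre_pos]
    exact hbound
  obtain ⟨hd1, hd2⟩ := abs_le.1 hd
  rw [abs_le]
  constructor
  · calc -(2 * α) = Real.arctan (Real.tan (-(2 * α))) :=
          (Real.arctan_tan (by linarith) (by linarith)).symm
      _ ≤ Real.arctan (w.im / w.re) := by
          apply Real.arctan_strictMono.monotone
          rw [Real.tan_neg]; linarith
  · calc Real.arctan (w.im / w.re) ≤ Real.arctan (Real.tan (2 * α)) :=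
        Real.arctan_strictMono.monotone hd2
      _ = 2 * α := Real.arctan_tan (by linarith) (by linarith)
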